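/- There exists a two-step reachability game in which some state q0 is not in W(n) for any natural number n, yet every state reachable from q0 in one step lies in W(n) for some natural number n; hence the finite-stage union W(ω) is not closed under the one-step verifier operator, i.e., W(ω) ⊊ W(ω+1). -/

import Mathlib

/-- A two-step reachability game: states `S`, for each state a nonempty type
of verifier moves, for each move a nonempty type of falsifier responses,
an outcome function `o`, and a target set `T`. -/
structure Game where
  S : Type
  M : S → Type
  M_ne : ∀ q, Nonempty (M q)
  B : (q : S) → M q → Type
  B_ne : ∀ q a, Nonempty (B q a)
  o : (q : S) → (a : M q) → B q a → S
  T : Set S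

/-- The one-step verifier operator `F(X) = T ∪ { q | ∃ a ∈ M(q), ∀ b, o(q,a,b) ∈ X }`. -/
def Game.step (G : Game) (X : Set G.S) : Set G.S :=
  G.T ∪ { q | ∃ a : G.M q, ∀ b : G.B q a, G.o q a b ∈ X }

/-- The winning-region iteration: `W 0 = T`, `W (γ+1) = step (W γ)`,
and `W λ = ⋃_{γ<λ} W γ` for limit `λ`. -/
noncomputable def Game.W (G : Game) (γ : Ordinal.{0}) : Set G.S :=
  Ordinal.limitRecOn γ G.T (fun _ X => G.step X)
    (fun δ _ ih => ⋃ x : { β : Ordinal.{0} // β < δ }, ih x.1 x.2)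

/-- The rank of a state: the least ordinal `γ` with `q ∈ W γ`
(meaningful when such an ordinal exists). -/
noncomputable def Game.rank (G : Game) (q : G.S) : Ordinal.{0} :=
  sInf { γ | q ∈ G.W γ }

lemma Game.W_zero (G : Game) : G.W 0 = G.T := Ordinal.limitRecOn_zero _ _ _

lemma Game.W_succ (G : Game) (γ : Ordinal.{0}) : G.W (γ + 1) = G.step (G.W γ) := by
  rw [Ordinal.add_one_eq_succ]
  exact Ordinal.limitRecOn_succ _ _ _ _

lemma Game.W_limit (G : Game) (δ : Ordinal.{0}) (h : Order.IsSuccLimit δ) :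
    G.W δ = ⋃ x : { β : Ordinal.{0} // β < δ }, G.W x.1 :=
  Ordinal.limitRecOn_limit _ _ _ _ h

lemma Game.step_mono (G : Game) {X Y : Set G.S} (h : X ⊆ Y) : G.step X ⊆ G.step Y := by
  rintro q (hq | ⟨a, ha⟩)
  · exact Or.inl hq
  · exact Or.inr ⟨a, fun b => h (ha b)⟩

def myB : Option (ℕ × ℕ) → Unit → Type
  | none, _ => ℕ
  | some _, _ => Unit

def myO : (q : Option (ℕ × ℕ)) → (a : Unit) → myB q a → Option (ℕ × ℕ)
  | none, _, i => some (i, 0)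
  | some p, _, _ => some (p.1, p.2 + 1)

noncomputable def G0 : Game where
  S := Option (ℕ × ℕ)
  M := fun _ => Unit
  M_ne := fun _ => ⟨()⟩
  B := myB
  B_ne := by rintro (_ | p) a
             · exact ⟨(0 : ℕ)⟩
             · exact ⟨()⟩
  o := myO
  T := { s | ∃ i : ℕ, s = some (i, i) }

lemma some_mem_W (n : ℕ) : ∀ i j : ℕ, j ≤ i → i ≤ j + n →
    (some (i, j) : G0.S) ∈ G0.W (n : Ordinal.{0}) := by
  induction n with
  | zero =>
    intro i j h1 h2
    rw [Nat.cast_zero, Game.W_zero]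
    exact ⟨i, by congr 2; omega⟩
  | succ n ih =>
    intro i j h1 h2
    rw [Nat.cast_succ, Game.W_succ]
    rcases Nat.lt_or_ge j i with h | h
    · exact Or.inr ⟨(), fun _ => ih i (j + 1) (by omega) (by omega)⟩
    · exact Or.inl ⟨i, by congr 2; omega⟩

lemma mem_W_bound (n : ℕ) : ∀ i j : ℕ, (some (i, j) : G0.S) ∈ G0.W (n : Ordinal.{0}) →
    i ≤ j + n := by
  induction n with
  | zero =>
    intro i j h
    rw [Nat.cast_zero, Game.W_zero] at h
    obtain ⟨k, hk⟩ := h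
    simp only [Option.some.injEq, Prod.mk.injEq] at hk
    omega
  | succ n ih =>
    intro i j h
    rw [Nat.cast_succ, Game.W_succ] at h
    rcases h with ⟨k, hk⟩ | ⟨a, ha⟩
    · simp only [Option.some.injEq, Prod.mk.injEq] at hk
      omega
    · have := ih i (j + 1) (ha ())
      omega

lemma none_not_mem_W (n : ℕ) : (none : G0.S) ∉ G0.W (n : Ordinal.{0}) := by
  cases n with
  | zero =>
    rw [Nat.cast_zero, Game.W_zero]
    rintro ⟨k, hk⟩
    cases hk
  | succ n =>
    rw [Nat.cast_succ, Game.W_succ]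
    rintro (⟨k, hk⟩ | ⟨a, ha⟩)
    · cases hk
    · have := mem_W_bound n (n + 1) 0 (ha (n + 1))
      omega

/-- There is a game with a state `q0` not in `W n` for any `n < ω`, while every
one-step successor of `q0` lies in some `W n` with `n < ω`; hence
`W ω ⊊ W (ω+1)`. -/
theorem finite_stages_not_closed :
    ∃ (G : Game) (q0 : G.S),
      (∀ n : ℕ, q0 ∉ G.W (n : Ordinal.{0})) ∧
      (∀ (a : G.M q0) (b : G.B q0 a), ∃ n : ℕ, G.o q0 a b ∈ G.W (n : Ordinal.{0})) ∧
      G.W Ordinal.omega0 ⊂ G.W (Ordinal.omega0 + 1) := by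
  refine ⟨G0, none, none_not_mem_W, ?_, ?_⟩
  · intro a b
    exact ⟨b, some_mem_W b b 0 (by omega) (by omega)⟩
  · have hWomega : G0.W Ordinal.omega0 =
        ⋃ x : { β : Ordinal.{0} // β < Ordinal.omega0 }, G0.W x.1 :=
      G0.W_limit _ Ordinal.isSuccLimit_omega0
    have hsub : ∀ {q : G0.S} {β : Ordinal.{0}}, β < Ordinal.omega0 → q ∈ G0.W β →
        q ∈ G0.W Ordinal.omega0 := by
      intro q β hβ hq
      rw [hWomega]
      exact Set.mem_iUnion.mpr ⟨⟨β, hβ⟩, hq⟩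
    constructor
    · -- W ω ⊆ W (ω+1)
      intro q hq
      rw [hWomega] at hq
      obtain ⟨⟨β, hβ⟩, hq⟩ := Set.mem_iUnion.mp hq
      obtain ⟨n, rfl⟩ := Ordinal.lt_omega0.mp hβ
      have hq' : q ∈ G0.W (n : Ordinal.{0}) := hq
      rw [Game.W_succ]
      cases n with
      | zero =>
        rw [Nat.cast_zero, Game.W_zero] at hq'
        exact Or.inl hq'
      | succ m =>
        rw [Nat.cast_succ, Game.W_succ] at hq'
        refine G0.step_mono ?_ hq'
        intro x hx
        exact hsub (Ordinal.lt_omega0.mpr ⟨m, rfl⟩) hx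
    · -- not W (ω+1) ⊆ W ω
      intro hle
      have h1 : (none : G0.S) ∈ G0.W (Ordinal.omega0 + 1) := by
        rw [Game.W_succ]
        exact Or.inr ⟨(), fun b => hsub (Ordinal.lt_omega0.mpr ⟨b, rfl⟩)
          (some_mem_W b b 0 (by omega) (by omega))⟩
      have h2 := hle h1
      rw [hWomega] at h2
      obtain ⟨⟨β, hβ⟩, h2⟩ := Set.mem_iUnion.mp h2
      obtain ⟨n, rfl⟩ := Ordinal.lt_omega0.mp hβ
      exact none_not_mem_W n h2
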